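/- For every ε > 0 there exists a bounded linear operator S : Z* → C(Δ)* with ‖S‖ ≤ (1+ε)² and S∘T* = id_{C(Δ)*}, where T* : C(Δ)* → Z* is the adjoint of T. -/

import Mathlib

open MeasureTheory NormedSpace
open scoped ENNReal

/-- The topological dual `E →L[𝕜] 𝕜` of a seminormed space (the former `NormedSpace.Dual`). -/
abbrev NormedSpace.Dual (𝕜 : Type*) (E : Type*) [NontriviallyNormedField 𝕜]
    [SeminormedAddCommGroup E] [NormedSpace 𝕜 E] : Type _ :=
  E →L[𝕜] 𝕜

/-- The adjoint `T* : Y* → X*` of a bounded linear operator `T : X → Y`,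
given by `T* g = g ∘ T`. -/
noncomputable def adjointCLM {X Y : Type*} [NormedAddCommGroup X] [NormedSpace ℝ X]
    [NormedAddCommGroup Y] [NormedSpace ℝ Y] (T : X →L[ℝ] Y) :
    Dual ℝ Y →L[ℝ] Dual ℝ X :=
  (ContinuousLinearMap.compL ℝ X Y ℝ).flip T

/-- The indicator function `g_{n,i} ∈ C(Δ)` of the clopen cylinder
`Δ_{n,i} = {a ∈ {0,1}^ℕ : the first n coordinates of a are the binary digits of i}`. -/
noncomputable def cylinderIndicator (n i : ℕ) : C((ℕ → Bool), ℝ) :=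
  ContinuousMap.comp
    ⟨fun b : Fin n → Bool => if ∀ k : Fin n, b k = i.testBit k then (1 : ℝ) else 0,
      continuous_of_discreteTopology⟩
    ⟨fun a k => a (k : ℕ), by continuity⟩

/-- The unit vector `e_{n,i}` of `Z = (⊕ₙ₌₀^∞ ℓ∞^{2ⁿ})_{ℓ₁}` (for `0 ≤ i < 2ⁿ`). -/
noncomputable def unitVec (n i : ℕ) (h : i < 2 ^ n) : lp (fun n : ℕ => Fin (2 ^ n) → ℝ) 1 :=
  lp.single 1 n (Pi.single (⟨i, h⟩ : Fin (2 ^ n)) 1)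

namespace Stmt15Aux

open Filter Topology

abbrev Δc : Type := ℕ → Bool
abbrev Zsp : Type := lp (fun n : ℕ => Fin (2 ^ n) → ℝ) 1

/-- The map sending `i < 2^n` to its bits is a bijection onto `Fin n → Bool`. -/
lemma bitMap_bijective (n : ℕ) :
    Function.Bijective (fun i : Fin (2 ^ n) => (fun k : Fin n => ((i : ℕ).testBit (k : ℕ)))) := by
  rw [Fintype.bijective_iff_injective_and_card]
  constructor
  · intro i j hij
    apply Fin.ext
    apply Nat.eq_of_testBit_eq
    intro k
    by_cases hk : k < n
    · exact congrFun hij ⟨k, hk⟩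
    · rw [Nat.testBit_lt_two_pow, Nat.testBit_lt_two_pow]
      · exact lt_of_lt_of_le j.2 (Nat.pow_le_pow_right (by norm_num) (le_of_not_gt hk))
      · exact lt_of_lt_of_le i.2 (Nat.pow_le_pow_right (by norm_num) (le_of_not_gt hk))
  · simp

/-- The index of the level-`n` cylinder containing `x`. -/
noncomputable def idx (n : ℕ) (x : Δc) : Fin (2 ^ n) :=
  ((bitMap_bijective n).surjective (fun k : Fin n => x (k : ℕ))).choose

lemma idx_spec (n : ℕ) (x : Δc) :
    ∀ k : Fin n, ((idx n x : ℕ).testBit (k : ℕ)) = x (k : ℕ) := fun k =>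
  congrFun ((bitMap_bijective n).surjective (fun k : Fin n => x (k : ℕ))).choose_spec k

lemma idx_unique {n : ℕ} {x : Δc} (i : Fin (2 ^ n))
    (h : ∀ k : Fin n, x (k : ℕ) = (i : ℕ).testBit (k : ℕ)) : i = idx n x := by
  apply (bitMap_bijective n).injective
  funext k
  show (i : ℕ).testBit (k : ℕ) = ((idx n x : ℕ)).testBit (k : ℕ)
  rw [idx_spec n x k]
  exact (h k).symm

/-- The sample point of the `i`-th cylinder of level `n`. -/
def pt (n : ℕ) (i : Fin (2 ^ n)) : Δc := fun k => (i : ℕ).testBit k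

/-- Truncation of `x` after `n` coordinates. -/
def trunc (n : ℕ) (x : Δc) : Δc := fun k => if k < n then x k else false

lemma pt_idx (n : ℕ) (x : Δc) : pt n (idx n x) = trunc n x := by
  funext k
  by_cases hk : k < n
  · simp only [pt, trunc, if_pos hk]
    exact idx_spec n x ⟨k, hk⟩
  · simp only [pt, trunc, if_neg hk]
    exact Nat.testBit_lt_two_pow
      (lt_of_lt_of_le (idx n x).2 (Nat.pow_le_pow_right (by norm_num) (le_of_not_gt hk)))

lemma continuous_trunc (n : ℕ) : Continuous (trunc n) := by
  apply continuous_pi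
  intro k
  by_cases hk : k < n
  · simpa only [trunc, if_pos hk] using (continuous_apply k)
  · simpa only [trunc, if_neg hk] using (continuous_const : Continuous fun _ : Δc => false)

/-- Truncation as a continuous map. -/
def truncCM (n : ℕ) : C(Δc, Δc) := ⟨trunc n, continuous_trunc n⟩

/-- The samples of `f` at level `n`. -/
noncomputable def samp (n : ℕ) (f : C(Δc, ℝ)) : Fin (2 ^ n) → ℝ := fun i => f (pt n i)

lemma norm_samp_le (n : ℕ) (f : C(Δc, ℝ)) : ‖samp n f‖ ≤ ‖f‖ := by
  apply pi_norm_le_iff_of_nonneg (norm_nonneg f) |>.2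
  intro i
  exact f.norm_coe_le_norm (pt n i)

/-- `lp.single 1 n` as a linear map. -/
noncomputable def sing (n : ℕ) : (Fin (2 ^ n) → ℝ) →ₗ[ℝ] Zsp where
  toFun := lp.single (E := fun m : ℕ => Fin (2 ^ m) → ℝ) 1 n
  map_add' v w := by
    apply lp.ext
    funext j
    by_cases hj : j = n
    · subst hj
      simp [lp.single_apply_self]
    · simp [lp.single_apply_ne 1 n _ hj]
  map_smul' c v := by
    simpa using lp.single_smul (E := fun m : ℕ => Fin (2 ^ m) → ℝ) 1 n v c

lemma sing_apply (n : ℕ) (v : Fin (2 ^ n) → ℝ) :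
    sing n v = lp.single (E := fun m : ℕ => Fin (2 ^ m) → ℝ) 1 n v := rfl

lemma norm_sing (n : ℕ) (v : Fin (2 ^ n) → ℝ) : ‖sing n v‖ = ‖v‖ := by
  have := lp.norm_single (p := 1) (E := fun m : ℕ => Fin (2 ^ m) → ℝ) (by norm_num)
    n v
  rw [sing_apply]
  simpa using this

lemma sing_eq_sum (n : ℕ) (v : Fin (2 ^ n) → ℝ) :
    sing n v = ∑ i : Fin (2 ^ n), v i • unitVec n (i : ℕ) i.2 := by
  have hv : v = ∑ i : Fin (2 ^ n), Pi.single i (v i) := (Finset.univ_sum_single v).symm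
  calc sing n v = sing n (∑ i : Fin (2 ^ n), Pi.single i (v i)) := by rw [← hv]
    _ = ∑ i : Fin (2 ^ n), sing n (Pi.single i (v i)) := map_sum _ _ _
    _ = ∑ i : Fin (2 ^ n), v i • unitVec n (i : ℕ) i.2 := by
        refine Finset.sum_congr rfl fun i _ => ?_
        have h1 : (Pi.single i (v i) : Fin (2 ^ n) → ℝ)
            = v i • (Pi.single i (1 : ℝ) : Fin (2 ^ n) → ℝ) := by
          rw [← Pi.single_smul, smul_eq_mul, mul_one]
        rw [h1, _root_.map_smul]
        rfl

lemma cylinderIndicator_apply (n i : ℕ) (x : Δc) :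
    cylinderIndicator n i x = if ∀ k : Fin n, x (k : ℕ) = i.testBit (k : ℕ) then (1 : ℝ) else 0 :=
  rfl

lemma sum_indicator_eval (n : ℕ) (f : C(Δc, ℝ)) (x : Δc) :
    ∑ i : Fin (2 ^ n), samp n f i * cylinderIndicator n (i : ℕ) x = f (trunc n x) := by
  have key : ∀ i : Fin (2 ^ n),
      cylinderIndicator n (i : ℕ) x = if idx n x = i then (1 : ℝ) else 0 := by
    intro i
    rw [cylinderIndicator_apply]
    by_cases h : ∀ k : Fin n, x (k : ℕ) = (i : ℕ).testBit (k : ℕ)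
    · rw [if_pos h, if_pos (idx_unique i h).symm]
    · rw [if_neg h, if_neg]
      rintro rfl
      exact h fun k => (idx_spec n x k).symm
  simp_rw [key, mul_ite, mul_one, mul_zero]
  rw [Finset.sum_ite_eq]
  simp [samp, pt_idx]

section UltraLim

/-- Limit along the hyperfilter. -/
noncomputable def ulim (a : ℕ → ℝ) : ℝ := limUnder (hyperfilter ℕ : Filter ℕ) a

lemma ulim_tendsto {a : ℕ → ℝ} {C : ℝ} (h : ∀ n, |a n| ≤ C) :
    Tendsto a (hyperfilter ℕ : Filter ℕ) (𝓝 (ulim a)) := by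
  obtain ⟨x, -, hx⟩ := (isCompact_Icc (a := -C) (b := C)).ultrafilter_le_nhds
    ((hyperfilter ℕ).map a) (by
      rw [le_principal_iff, Ultrafilter.mem_coe, Ultrafilter.mem_map]
      exact Filter.univ_mem' fun n => by
        simpa [Set.mem_Icc] using abs_le.1 (h n))
  have hx' : Tendsto a (hyperfilter ℕ : Filter ℕ) (𝓝 x) := hx
  rwa [ulim, hx'.limUnder_eq]

lemma abs_ulim_le {a : ℕ → ℝ} {C : ℝ} (h : ∀ n, |a n| ≤ C) : |ulim a| ≤ C := by
  have ht := ulim_tendsto h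
  refine abs_le.2 ⟨?_, ?_⟩
  · exact ge_of_tendsto ht (Filter.Eventually.of_forall fun n => (abs_le.1 (h n)).1)
  · exact le_of_tendsto ht (Filter.Eventually.of_forall fun n => (abs_le.1 (h n)).2)

lemma ulim_add {a b : ℕ → ℝ} {C D : ℝ} (ha : ∀ n, |a n| ≤ C) (hb : ∀ n, |b n| ≤ D) :
    ulim (fun n => a n + b n) = ulim a + ulim b :=
  ((ulim_tendsto ha).add (ulim_tendsto hb)).limUnder_eq

lemma ulim_smul {a : ℕ → ℝ} {C : ℝ} (c : ℝ) (ha : ∀ n, |a n| ≤ C) :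
    ulim (fun n => c * a n) = c * ulim a :=
  ((ulim_tendsto ha).const_mul c).limUnder_eq

lemma ulim_eq_of_tendsto {a : ℕ → ℝ} {l : ℝ} (h : Tendsto a atTop (𝓝 l)) : ulim a = l :=
  (h.mono_left Nat.hyperfilter_le_atTop).limUnder_eq

end UltraLim

/-- Uniform approximation by truncations. -/
lemma tendsto_comp_trunc (f : C(Δc, ℝ)) :
    Tendsto (fun n => f.comp (truncCM n)) atTop (𝓝 f) := by
  rw [Metric.tendsto_atTop]
  intro ε hε
  -- for each x choose a cylinder on which f varies by < ε/2
  have hcont : ∀ x : Δc, ∃ N : ℕ, ∀ y : Δc, (∀ k < N, y k = x k) → |f y - f x| < ε / 4 := by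
    intro x
    have hx : f ⁻¹' Metric.ball (f x) (ε / 4) ∈ 𝓝 x :=
      f.continuous.continuousAt (Metric.ball_mem_nhds _ (by linarith))
    obtain ⟨s, ⟨z, N, rfl⟩, hxs, hsub⟩ :=
      (PiNat.isTopologicalBasis_cylinders (fun _ : ℕ => Bool)).mem_nhds_iff.1 hx
    refine ⟨N, fun y hy => ?_⟩
    have hys : y ∈ PiNat.cylinder z N := by
      intro k hk
      rw [hy k hk]
      exact hxs k hk
    have := hsub hys
    simpa [Real.dist_eq] using this
  choose N hN using hcont
  -- compactness
  have hcov : (Set.univ : Set Δc) ⊆ ⋃ x : Δc, PiNat.cylinder x (N x) := by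
    intro x _
    exact Set.mem_iUnion.2 ⟨x, PiNat.self_mem_cylinder x (N x)⟩
  obtain ⟨t, ht⟩ := isCompact_univ.elim_finite_subcover
    (fun x : Δc => PiNat.cylinder x (N x))
    (fun x => PiNat.isOpen_cylinder (fun _ : ℕ => Bool) x (N x)) hcov
  obtain ⟨M, hM⟩ : ∃ M : ℕ, ∀ y ∈ t, N y ≤ M := by
    rcases t.eq_empty_or_nonempty with h | h
    · exact ⟨0, fun y hy => by simp [h] at hy⟩
    · exact ⟨t.sup' h N, fun y hy => Finset.le_sup' N hy⟩
  refine ⟨M, fun n hn => ?_⟩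
  rw [dist_eq_norm]
  have hb : ‖f.comp (truncCM n) - f‖ ≤ ε / 2 := by
    apply ContinuousMap.norm_le _ (by linarith) |>.2
    intro x
    obtain ⟨y, hyt, hxy⟩ := Set.mem_iUnion₂.1 (ht (Set.mem_univ x))
    have h1 : trunc n x ∈ PiNat.cylinder y (N y) := by
      intro k hk
      have hkn : k < n := lt_of_lt_of_le (lt_of_lt_of_le hk (hM y hyt)) hn
      rw [show trunc n x k = x k from if_pos hkn]
      exact hxy k hk
    have e1 : |f (trunc n x) - f y| < ε / 4 := hN y (trunc n x) h1
    have e2 : |f x - f y| < ε / 4 := hN y x hxy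
    have h3 : |f (trunc n x) - f x| ≤ |f (trunc n x) - f y| + |f x - f y| := by
      calc |f (trunc n x) - f x|
          = |(f (trunc n x) - f y) - (f x - f y)| := by
            rw [sub_sub_sub_cancel_right]
        _ ≤ |f (trunc n x) - f y| + |f x - f y| := abs_sub _ _
    have h4 : |f (trunc n x) - f x| ≤ ε / 2 := by linarith
    simpa [Real.norm_eq_abs, truncCM] using h4
  linarith

section Construction

/-- The raw value of the left inverse: an ultrafilter limit of `φ` applied to the
level-`n` samples of `f`. -/
noncomputable def Sfun (φ : Dual ℝ Zsp) (f : C(Δc, ℝ)) : ℝ :=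
  ulim (fun n => φ (sing n (samp n f)))

lemma abs_apply_le (φ : Dual ℝ Zsp) (f : C(Δc, ℝ)) (n : ℕ) :
    |φ (sing n (samp n f))| ≤ ‖φ‖ * ‖f‖ := by
  have h1 := φ.le_opNorm (sing n (samp n f))
  rw [norm_sing] at h1
  calc |φ (sing n (samp n f))| = ‖φ (sing n (samp n f))‖ := (Real.norm_eq_abs _).symm
    _ ≤ ‖φ‖ * ‖samp n f‖ := h1
    _ ≤ ‖φ‖ * ‖f‖ := mul_le_mul_of_nonneg_left (norm_samp_le n f) (norm_nonneg φ)

lemma abs_Sfun_le (φ : Dual ℝ Zsp) (f : C(Δc, ℝ)) : |Sfun φ f| ≤ ‖φ‖ * ‖f‖ :=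
  abs_ulim_le (abs_apply_le φ f)

lemma samp_add (n : ℕ) (f g : C(Δc, ℝ)) : samp n (f + g) = samp n f + samp n g := rfl

lemma samp_smul (n : ℕ) (c : ℝ) (f : C(Δc, ℝ)) : samp n (c • f) = c • samp n f := rfl

lemma Sfun_add_f (φ : Dual ℝ Zsp) (f g : C(Δc, ℝ)) :
    Sfun φ (f + g) = Sfun φ f + Sfun φ g := by
  have h : ∀ n, φ (sing n (samp n (f + g)))
      = φ (sing n (samp n f)) + φ (sing n (samp n g)) := by
    intro n
    rw [samp_add, map_add, map_add]
  unfold Sfun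
  simp_rw [h]
  exact ulim_add (abs_apply_le φ f) (abs_apply_le φ g)

lemma Sfun_smul_f (φ : Dual ℝ Zsp) (c : ℝ) (f : C(Δc, ℝ)) :
    Sfun φ (c • f) = c * Sfun φ f := by
  have h : ∀ n, φ (sing n (samp n (c • f))) = c * φ (sing n (samp n f)) := by
    intro n
    rw [samp_smul, _root_.map_smul, _root_.map_smul, smul_eq_mul]
  unfold Sfun
  simp_rw [h]
  exact ulim_smul c (abs_apply_le φ f)

/-- The left inverse applied to `φ`, as a functional on `C(Δ)`. -/
noncomputable def S1 (φ : Dual ℝ Zsp) : Dual ℝ C(Δc, ℝ) :=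
  LinearMap.mkContinuous
    { toFun := Sfun φ
      map_add' := Sfun_add_f φ
      map_smul' := Sfun_smul_f φ } ‖φ‖
    (fun f => by simpa [Real.norm_eq_abs] using abs_Sfun_le φ f)

lemma S1_apply (φ : Dual ℝ Zsp) (f : C(Δc, ℝ)) : S1 φ f = Sfun φ f := rfl

lemma norm_S1_le (φ : Dual ℝ Zsp) : ‖S1 φ‖ ≤ ‖φ‖ :=
  LinearMap.mkContinuous_norm_le _ (norm_nonneg φ) _

lemma S1_add (φ ψ : Dual ℝ Zsp) : S1 (φ + ψ) = S1 φ + S1 ψ := by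
  apply ContinuousLinearMap.ext
  intro f
  have h : ∀ n, (φ + ψ) (sing n (samp n f))
      = φ (sing n (samp n f)) + ψ (sing n (samp n f)) := fun n => rfl
  show Sfun (φ + ψ) f = Sfun φ f + Sfun ψ f
  unfold Sfun
  simp_rw [h]
  exact ulim_add (abs_apply_le φ f) (abs_apply_le ψ f)

lemma S1_smul (c : ℝ) (φ : Dual ℝ Zsp) : S1 (c • φ) = c • S1 φ := by
  apply ContinuousLinearMap.ext
  intro f
  have h : ∀ n, (c • φ) (sing n (samp n f)) = c * φ (sing n (samp n f)) := fun n => rfl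
  show Sfun (c • φ) f = c * Sfun φ f
  unfold Sfun
  simp_rw [h]
  exact ulim_smul c (abs_apply_le φ f)

/-- The left inverse of `T*`, as a bounded operator. -/
noncomputable def Sop : Dual ℝ Zsp →L[ℝ] Dual ℝ C(Δc, ℝ) :=
  LinearMap.mkContinuous
    { toFun := S1
      map_add' := S1_add
      map_smul' := S1_smul } 1
    (fun φ => by simpa using norm_S1_le φ)

lemma Sop_apply (φ : Dual ℝ Zsp) (f : C(Δc, ℝ)) : Sop φ f = Sfun φ f := rfl

lemma norm_Sop_le : ‖Sop‖ ≤ 1 :=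
  LinearMap.mkContinuous_norm_le _ zero_le_one _

end Construction

end Stmt15Aux

/-- Let `T : Z → C(Δ)` be the bounded linear operator determined by
`T e_{n,i} = g_{n,i}`. For every `ε > 0` there is a bounded linear operator
`S : Z* → C(Δ)*` with `‖S‖ ≤ (1+ε)²` and `S ∘ T* = id_{C(Δ)*}`. -/
theorem stmt15 (T : lp (fun n : ℕ => Fin (2 ^ n) → ℝ) 1 →L[ℝ] C((ℕ → Bool), ℝ))
    (hT : ∀ (n i : ℕ) (h : i < 2 ^ n), T (unitVec n i h) = cylinderIndicator n i)
    (ε : ℝ) (hε : 0 < ε) :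
    ∃ S : Dual ℝ (lp (fun n : ℕ => Fin (2 ^ n) → ℝ) 1) →L[ℝ] Dual ℝ C((ℕ → Bool), ℝ),
      ‖S‖ ≤ (1 + ε) ^ 2 ∧
      S.comp (adjointCLM T) = ContinuousLinearMap.id ℝ (Dual ℝ C((ℕ → Bool), ℝ)) := by
  open Stmt15Aux in
  refine ⟨Sop, ?_, ?_⟩
  · calc ‖Sop‖ ≤ 1 := norm_Sop_le
      _ ≤ (1 + ε) ^ 2 := by nlinarith
  · apply ContinuousLinearMap.ext
    intro g
    apply ContinuousLinearMap.ext
    intro f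
    have hTE : ∀ n : ℕ, T (sing n (samp n f)) = f.comp (truncCM n) := by
      intro n
      rw [sing_eq_sum, map_sum]
      have hterm : ∀ i : Fin (2 ^ n), T (samp n f i • unitVec n (i : ℕ) i.2)
          = samp n f i • cylinderIndicator n (i : ℕ) := by
        intro i
        rw [_root_.map_smul, hT n (i : ℕ) i.2]
      rw [Finset.sum_congr rfl fun i _ => hterm i]
      ext x
      simp only [ContinuousMap.coe_sum, Finset.sum_apply, ContinuousMap.coe_smul, Pi.smul_apply,
        smul_eq_mul]
      exact sum_indicator_eval n f x
    have hseq : ∀ n : ℕ, (adjointCLM T g) (sing n (samp n f)) = g (f.comp (truncCM n)) := by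
      intro n
      show g (T (sing n (samp n f))) = g (f.comp (truncCM n))
      rw [hTE n]
    show Sfun (adjointCLM T g) f = g f
    unfold Sfun
    simp_rw [hseq]
    exact ulim_eq_of_tendsto ((g.continuous.tendsto f).comp (tendsto_comp_trunc f))
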